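/- Let y : [0,∞) → [0,∞) be nondecreasing, right-continuous, unbounded above, with y(0) = 0. Then for every t ≥ 0, ((y ∘ y^{-1})^{-1})(t) = ((y^− ∘ (y^{-1})^−))^+(t), i.e. the generalized inverse of the composed function y ∘ y^{-1} evaluated at t equals the right limit at t of the function u ↦ y^−((y^{-1})^−(u)). -/

import Mathlib

open scoped NNReal
open Filter Topology Function

noncomputable section

/-- The generalized (right-continuous) inverse `y⁻¹(t) = inf {s > 0 : y(s) > t}` of a
nondecreasing, right-continuous, unbounded function `y : [0,∞) → [0,∞)`. -/
def ginv (y : ℝ≥0 → ℝ≥0) (t : ℝ≥0) : ℝ≥0 :=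
  sInf {s : ℝ≥0 | 0 < s ∧ t < y s}

lemma ginv_le {y : ℝ≥0 → ℝ≥0} (h0 : y 0 = 0) {t s : ℝ≥0} (h : t < y s) : ginv y t ≤ s := by
  have hs : 0 < s := by
    rcases eq_or_lt_of_le (zero_le : (0 : ℝ≥0) ≤ s) with rfl | hs
    · exact absurd (h.trans_le (le_of_eq h0)) (not_lt.2 (zero_le : (0 : ℝ≥0) ≤ t))
    · exact hs
  exact csInf_le (OrderBot.bddBelow _) ⟨hs, h⟩

lemma lt_of_ginv_lt {y : ℝ≥0 → ℝ≥0} (hmono : Monotone y)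
    (hub : ∀ M : ℝ≥0, ∃ s : ℝ≥0, M < y s) {t s : ℝ≥0} (h : ginv y t < s) : t < y s := by
  have hne : {s : ℝ≥0 | 0 < s ∧ t < y s}.Nonempty := by
    obtain ⟨σ, hσ⟩ := hub t
    exact ⟨σ + 1, by positivity, hσ.trans_le (hmono le_self_add)⟩
  obtain ⟨a, ⟨-, ha⟩, has⟩ := exists_lt_of_csInf_lt hne h
  exact ha.trans_le (hmono has.le)

lemma ginv_mono {y : ℝ≥0 → ℝ≥0} (hmono : Monotone y)
    (hub : ∀ M : ℝ≥0, ∃ s : ℝ≥0, M < y s) : Monotone (ginv y) := by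
  intro a b hab
  have hne : {s : ℝ≥0 | 0 < s ∧ b < y s}.Nonempty := by
    obtain ⟨σ, hσ⟩ := hub b
    exact ⟨σ + 1, by positivity, hσ.trans_le (hmono le_self_add)⟩
  exact csInf_le_csInf (OrderBot.bddBelow _) hne fun s hs => ⟨hs.1, hab.trans_lt hs.2⟩

lemma le_y_ginv {y : ℝ≥0 → ℝ≥0} (hmono : Monotone y)
    (hrc : ∀ t : ℝ≥0, ContinuousWithinAt y (Set.Ici t) t)
    (hub : ∀ M : ℝ≥0, ∃ s : ℝ≥0, M < y s) (t : ℝ≥0) : t ≤ y (ginv y t) := by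
  have h1 : Filter.Tendsto y (𝓝[>] (ginv y t)) (𝓝 (y (ginv y t))) :=
    (hrc (ginv y t)).tendsto.mono_left (nhdsWithin_mono _ Set.Ioi_subset_Ici_self)
  have h2 : ∀ᶠ s in 𝓝[>] (ginv y t), t ≤ y s := by
    filter_upwards [self_mem_nhdsWithin] with s hs
    exact (lt_of_ginv_lt hmono hub hs).le
  exact ge_of_tendsto h1 h2

/-- Lemma 5.1: for `y : [0,∞) → [0,∞)` nondecreasing, right-continuous, unbounded above with
`y(0) = 0`, one has `(y ∘ y⁻¹)⁻¹ = (y⁻ ∘ (y⁻¹)⁻)⁺` pointwise: the generalized inverse of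
`y ∘ y⁻¹` at `t` equals the right limit at `t` of `u ↦ y⁻((y⁻¹)⁻(u))`. -/
theorem ginv_comp_eq_rightLim (y : ℝ≥0 → ℝ≥0) (hmono : Monotone y)
    (hrc : ∀ t : ℝ≥0, ContinuousWithinAt y (Set.Ici t) t)
    (hub : ∀ M : ℝ≥0, ∃ s : ℝ≥0, M < y s) (h0 : y 0 = 0) (t : ℝ≥0) :
    ginv (fun s => y (ginv y s)) t =
      Function.rightLim (fun u => Function.leftLim y (Function.leftLim (ginv y) u)) t := by
  set g := ginv y with hg
  set f : ℝ≥0 → ℝ≥0 := fun s => y (g s) with hf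
  set h : ℝ≥0 → ℝ≥0 := fun u => Function.leftLim y (Function.leftLim g u) with hh
  have hgmono : Monotone g := ginv_mono hmono hub
  have hfmono : Monotone f := fun a b hab => hmono (hgmono hab)
  have hfge : ∀ s, s ≤ f s := fun s => le_y_ginv hmono hrc hub s
  have hhmono : Monotone h := fun a b hab => hmono.leftLim (hgmono.leftLim hab)
  -- key: y x ≤ s whenever x < g s
  have hyle : ∀ {s x : ℝ≥0}, x < g s → y x ≤ s := by
    intro s x hx
    by_contra hc
    exact absurd (ginv_le h0 (not_le.1 hc)) (not_le.2 hx)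
  -- leftLim y (g s) ≤ s
  have hll : ∀ s : ℝ≥0, Function.leftLim y (g s) ≤ s := by
    intro s
    rcases eq_or_lt_of_le (zero_le : (0 : ℝ≥0) ≤ g s) with hz | hz
    · rw [← hz, leftLim_eq_of_eq_bot y (by simp [← hz, nhdsLT_eq_bot_iff]), h0]
      exact zero_le
    · haveI : (𝓝[<] (g s)).NeBot := nhdsWithin_Iio_self_neBot' ⟨0, hz⟩
      rw [hmono.leftLim_eq_sSup]
      refine csSup_le ⟨y 0, 0, hz, rfl⟩ ?_
      rintro v ⟨x, hx, rfl⟩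
      exact hyle hx
  refine le_antisymm ?_ ?_
  · -- ginv f t ≤ rightLim h t
    have key : ∀ u, t < u → ginv f t ≤ h u := by
      intro u htu
      refine le_of_forall_gt_imp_ge_of_dense ?_
      intro s' hs'
      have hs'0 : 0 < s' := zero_le.trans_lt hs'
      -- show t < f s'
      have hts' : t < f s' := by
        by_contra hc
        push_neg at hc
        obtain ⟨u'', hu1, hu2⟩ := exists_between htu
        have h1 : s' ≤ u'' := ((hfge s').trans hc).trans hu1.le
        have h2 : g s' ≤ g u'' := hgmono h1
        have h3 : g s' < g u'' := by
          rcases h2.lt_or_eq with h | h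
          · exact h
          · have h5 : u'' ≤ y (g u'') := hfge u''
            rw [← h] at h5
            exact absurd (h5.trans hc) (not_le.2 hu1)
        have h4 : g s' < Function.leftLim g u := h3.trans_le (hgmono.le_leftLim hu2)
        have h5 : y (g s') ≤ Function.leftLim y (Function.leftLim g u) :=
          hmono.le_leftLim h4
        exact absurd ((hfge s').trans h5) (not_le.2 hs')
      exact csInf_le (OrderBot.bddBelow _) ⟨hs'0, hts'⟩
    have h1 : Filter.Tendsto h (𝓝[>] t) (𝓝 (Function.rightLim h t)) :=
      hhmono.tendsto_rightLim t
    refine ge_of_tendsto h1 ?_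
    filter_upwards [self_mem_nhdsWithin] with u hu
    exact key u hu
  · -- rightLim h t ≤ ginv f t
    have hne : {s : ℝ≥0 | 0 < s ∧ t < f s}.Nonempty :=
      ⟨t + 1, by positivity, lt_of_lt_of_le (lt_add_one t) (hfge (t + 1))⟩
    refine le_csInf hne ?_
    rintro s ⟨hs0, hts⟩
    have hrl : Function.rightLim h t ≤ h (f s) := hhmono.rightLim_le hts
    refine hrl.trans ?_
    -- h (f s) = leftLim y (leftLim g (f s)) ≤ leftLim y (g s) ≤ s
    have hgl : Function.leftLim g (f s) ≤ g s := by
      have hfs0 : 0 < f s := (zero_le : (0 : ℝ≥0) ≤ t).trans_lt hts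
      haveI : (𝓝[<] (f s)).NeBot := nhdsWithin_Iio_self_neBot' ⟨0, hfs0⟩
      rw [hgmono.leftLim_eq_sSup]
      refine csSup_le ⟨g 0, 0, hfs0, rfl⟩ ?_
      rintro v ⟨u', hu', rfl⟩
      exact ginv_le h0 hu'
    exact (hmono.leftLim hgl).trans (hll s)
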